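/- Set dr := X₁ + X₂ + X₃, and let (𝒳₁,…,𝒳₈) := (I_{12}^{+}P₁^{+}, I_{12}^{+}P₁^{−}, I_{12}^{−}P₁^{+}, I_{12}^{−}P₁^{−}, I_{12}^{+}P₃^{+}, I_{12}^{+}P₃^{−}, I_{12}^{−}P₃^{+}, I_{12}^{−}P₃^{−}). For λ₁,…,λ₈ ∈ ℝ, the element (K+1)(dr · Σ_{A=1}^{8} λ_A 𝒳_A) is a real scalar multiple of the identity of A if and only if λ₄ = λ₃, λ₅ = −(3λ₁ + λ₂)/4, λ₆ = −(λ₁ + 3λ₂)/4, λ₇ = (3/4)(λ₁ − λ₂) − λ₃, and λ₈ = −(3/4)(λ₁ − λ₂) − λ₃; moreover, when these relations hold the element (K+1)(dr · Σ_{A=1}^{8} λ_A 𝒳_A) is equal to 0 (the co-value vanishes together with the proper value). -/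

import Mathlib

open scoped TensorProduct

noncomputable section

/-- The standard positive-definite quadratic form on `ℝ³`. -/
abbrev Q3 : QuadraticForm ℝ (Fin 3 → ℝ) :=
  QuadraticMap.weightedSumSquares ℝ (fun _ : Fin 3 => (1 : ℝ))

/-- The Clifford algebra of 3-dimensional Euclidean space. -/
abbrev Cl3 : Type := CliffordAlgebra Q3

/-- The tensor product of two copies of `Cl3`, as ℝ-algebras. -/
abbrev A3 : Type := Cl3 ⊗[ℝ] Cl3

/-- The generators `e₁, e₂, e₃` (indexed by `Fin 3`). -/
def e (l : Fin 3) : Cl3 := CliffordAlgebra.ι Q3 (Pi.single l 1)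

/-- `X_l := e_l ⊗ e_l`. -/
def X (l : Fin 3) : A3 := e l ⊗ₜ[ℝ] e l

/-- `w^i := (e_j e_k) ⊗ 1` for `(i,j,k)` a cyclic permutation of the indices. -/
def w (i : Fin 3) : A3 := (e (i + 1) * e (i + 2)) ⊗ₜ[ℝ] (1 : Cl3)

/-- The (ℝ-linear) operators `J_l(U) := (1/2)(w^l U − U w^l)`. -/
def J (l : Fin 3) (U : A3) : A3 := (1/2 : ℝ) • (w l * U - U * w l)

/-- Kähler's total angular momentum operator `K+1`. -/
def K1 (U : A3) : A3 := J 0 U * w 0 + J 1 U * w 1 + J 2 U * w 2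

/-- The idempotents `I_{ij}^ε := (1/2)(1 + ε X_i X_j)`. -/
def Iem (i j : Fin 3) (ε : ℝ) : A3 := (1/2 : ℝ) • ((1 : A3) + ε • (X i * X j))

/-- The idempotents `P_l^δ := (1/2)(1 + δ X_l)`. -/
def P (l : Fin 3) (δ : ℝ) : A3 := (1/2 : ℝ) • ((1 : A3) + δ • X l)

/-- The eight idempotents `𝒳₁,…,𝒳₈` of Table 1. -/
def XA : Fin 8 → A3 :=
  ![Iem 0 1 1 * P 0 1, Iem 0 1 1 * P 0 (-1),
    Iem 0 1 (-1) * P 0 1, Iem 0 1 (-1) * P 0 (-1),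
    Iem 0 1 1 * P 2 1, Iem 0 1 1 * P 2 (-1),
    Iem 0 1 (-1) * P 2 1, Iem 0 1 (-1) * P 2 (-1)]

open Kronecker

section aux
set_option maxHeartbeats 1000000

lemma e_sq (l : Fin 3) : e l * e l = 1 := by
  rw [e, CliffordAlgebra.ι_sq_scalar]
  have : Q3 (Pi.single l 1) = 1 := by
    rw [QuadraticMap.weightedSumSquares_apply]
    fin_cases l <;> simp [Fin.sum_univ_three, Pi.single_apply]
  rw [this, map_one]

lemma e_anticomm {i j : Fin 3} (h : i ≠ j) : e j * e i = -(e i * e j) := by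
  have := CliffordAlgebra.ι_mul_ι_add_swap (Q := Q3) (Pi.single i 1) (Pi.single j 1)
  have hp : QuadraticMap.polar Q3 (Pi.single i (1:ℝ)) (Pi.single j 1) = 0 := by
    rw [QuadraticMap.polar]
    rw [QuadraticMap.weightedSumSquares_apply, QuadraticMap.weightedSumSquares_apply,
      QuadraticMap.weightedSumSquares_apply]
    fin_cases i <;> fin_cases j <;> simp_all [Fin.sum_univ_three, Pi.single_apply]
  rw [hp, map_zero] at this
  rw [e, e]
  linear_combination (norm := noncomm_ring) this

lemma e10 : e 1 * e 0 = -(e 0 * e 1) := e_anticomm (by decide)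
lemma e20 : e 2 * e 0 = -(e 0 * e 2) := e_anticomm (by decide)
lemma e21 : e 2 * e 1 = -(e 1 * e 2) := e_anticomm (by decide)
lemma e10' (x : Cl3) : e 1 * (e 0 * x) = -(e 0 * (e 1 * x)) := by
  rw [← mul_assoc, e10, neg_mul, mul_assoc]
lemma e20' (x : Cl3) : e 2 * (e 0 * x) = -(e 0 * (e 2 * x)) := by
  rw [← mul_assoc, e20, neg_mul, mul_assoc]
lemma e21' (x : Cl3) : e 2 * (e 1 * x) = -(e 1 * (e 2 * x)) := by
  rw [← mul_assoc, e21, neg_mul, mul_assoc]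
lemma e_sq' (l : Fin 3) (x : Cl3) : e l * (e l * x) = x := by
  rw [← mul_assoc, e_sq, one_mul]

lemma hsum (lam : Fin 8 → ℝ) :
    (X 0 + X 1 + X 2) * ∑ A : Fin 8, lam A • XA A =
      ((lam 0 - lam 1)/2 + (lam 4 - lam 5)/4 + (lam 6 - lam 7)/4) • (1 : A3)
    + ((lam 0 + lam 1 + lam 4 + lam 5)/2) • (e 0 ⊗ₜ[ℝ] e 0)
    + ((lam 0 + lam 1 + lam 4 + lam 5)/2) • (e 1 ⊗ₜ[ℝ] e 1)
    + ((lam 0 + lam 1 + lam 2 + lam 3 + lam 4 + lam 5 + lam 6 + lam 7)/4) • (e 2 ⊗ₜ[ℝ] e 2)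
    + ((lam 0 - lam 1)/2 + (lam 4 - lam 5)/4 - (lam 6 - lam 7)/4) •
        ((e 0 * e 1) ⊗ₜ[ℝ] (e 0 * e 1))
    + ((lam 0 - lam 1)/4 + (lam 2 - lam 3)/4 + (lam 4 - lam 5)/2) •
        ((e 0 * e 2) ⊗ₜ[ℝ] (e 0 * e 2))
    + ((lam 0 - lam 1)/4 - (lam 2 - lam 3)/4 + (lam 4 - lam 5)/2) •
        ((e 1 * e 2) ⊗ₜ[ℝ] (e 1 * e 2))
    + ((lam 0 + lam 1 - lam 2 - lam 3 + lam 4 + lam 5 - lam 6 - lam 7)/4) •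
        ((e 0 * (e 1 * e 2)) ⊗ₜ[ℝ] (e 0 * (e 1 * e 2))) := by
  rw [Fin.sum_univ_eight]
  show (X 0 + X 1 + X 2) *
    (lam 0 • (Iem 0 1 1 * P 0 1) + lam 1 • (Iem 0 1 1 * P 0 (-1))
     + lam 2 • (Iem 0 1 (-1) * P 0 1) + lam 3 • (Iem 0 1 (-1) * P 0 (-1))
     + lam 4 • (Iem 0 1 1 * P 2 1) + lam 5 • (Iem 0 1 1 * P 2 (-1))
     + lam 6 • (Iem 0 1 (-1) * P 2 1) + lam 7 • (Iem 0 1 (-1) * P 2 (-1))) = _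
  simp only [Iem, P, X, one_smul, neg_one_smul,
    smul_add, smul_sub, smul_smul, mul_add, add_mul, smul_mul_assoc, mul_smul_comm,
    Algebra.TensorProduct.tmul_mul_tmul, one_mul, mul_one, mul_assoc,
    e10, e20, e21, e10', e20', e21', e_sq, e_sq',
    mul_neg, neg_mul, neg_neg, smul_neg,
    TensorProduct.neg_tmul, TensorProduct.tmul_neg,
    ← Algebra.TensorProduct.one_def]
  module

lemma w0 : w 0 = (e 1 * e 2) ⊗ₜ[ℝ] (1 : Cl3) := rfl
lemma w1 : w 1 = (e 2 * e 0) ⊗ₜ[ℝ] (1 : Cl3) := rfl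
lemma w2 : w 2 = (e 0 * e 1) ⊗ₜ[ℝ] (1 : Cl3) := rfl

section K1lemmas
set_option maxHeartbeats 1000000

lemma K1_add (U V : A3) : K1 (U + V) = K1 U + K1 V := by
  simp only [K1, J, mul_add, add_mul, sub_mul, smul_add, smul_sub, smul_mul_assoc]
  module

lemma K1_smul (r : ℝ) (U : A3) : K1 (r • U) = r • K1 U := by
  simp only [K1, J, smul_mul_assoc, mul_smul_comm, smul_add, smul_sub, smul_smul, sub_mul]
  module

lemma K1_one : K1 (1 : A3) = 0 := by
  simp [K1, J]

lemma K1_e0 (y : Cl3) : K1 (e 0 ⊗ₜ[ℝ] y) = (2:ℝ) • (e 0 ⊗ₜ[ℝ] y) := by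
  simp only [K1, J, w0, w1, w2, Algebra.TensorProduct.tmul_mul_tmul, one_mul, mul_one,
    smul_mul_assoc, sub_mul, mul_assoc, e10, e20, e21, e10', e20', e21', e_sq, e_sq',
    TensorProduct.neg_tmul, TensorProduct.tmul_neg, mul_neg, neg_mul, neg_neg, smul_neg]
  module

lemma K1_e1 (y : Cl3) : K1 (e 1 ⊗ₜ[ℝ] y) = (2:ℝ) • (e 1 ⊗ₜ[ℝ] y) := by
  simp only [K1, J, w0, w1, w2, Algebra.TensorProduct.tmul_mul_tmul, one_mul, mul_one,
    smul_mul_assoc, sub_mul, mul_assoc, e10, e20, e21, e10', e20', e21', e_sq, e_sq',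
    TensorProduct.neg_tmul, TensorProduct.tmul_neg, mul_neg, neg_mul, neg_neg, smul_neg]
  module

lemma K1_e2 (y : Cl3) : K1 (e 2 ⊗ₜ[ℝ] y) = (2:ℝ) • (e 2 ⊗ₜ[ℝ] y) := by
  simp only [K1, J, w0, w1, w2, Algebra.TensorProduct.tmul_mul_tmul, one_mul, mul_one,
    smul_mul_assoc, sub_mul, mul_assoc, e10, e20, e21, e10', e20', e21', e_sq, e_sq',
    TensorProduct.neg_tmul, TensorProduct.tmul_neg, mul_neg, neg_mul, neg_neg, smul_neg]
  module

lemma K1_e01 (y : Cl3) : K1 ((e 0 * e 1) ⊗ₜ[ℝ] y) = (2:ℝ) • ((e 0 * e 1) ⊗ₜ[ℝ] y) := by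
  simp only [K1, J, w0, w1, w2, Algebra.TensorProduct.tmul_mul_tmul, one_mul, mul_one,
    smul_mul_assoc, sub_mul, mul_assoc, e10, e20, e21, e10', e20', e21', e_sq, e_sq',
    TensorProduct.neg_tmul, TensorProduct.tmul_neg, mul_neg, neg_mul, neg_neg, smul_neg]
  module

lemma K1_e02 (y : Cl3) : K1 ((e 0 * e 2) ⊗ₜ[ℝ] y) = (2:ℝ) • ((e 0 * e 2) ⊗ₜ[ℝ] y) := by
  simp only [K1, J, w0, w1, w2, Algebra.TensorProduct.tmul_mul_tmul, one_mul, mul_one,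
    smul_mul_assoc, sub_mul, mul_assoc, e10, e20, e21, e10', e20', e21', e_sq, e_sq',
    TensorProduct.neg_tmul, TensorProduct.tmul_neg, mul_neg, neg_mul, neg_neg, smul_neg]
  module

lemma K1_e12 (y : Cl3) : K1 ((e 1 * e 2) ⊗ₜ[ℝ] y) = (2:ℝ) • ((e 1 * e 2) ⊗ₜ[ℝ] y) := by
  simp only [K1, J, w0, w1, w2, Algebra.TensorProduct.tmul_mul_tmul, one_mul, mul_one,
    smul_mul_assoc, sub_mul, mul_assoc, e10, e20, e21, e10', e20', e21', e_sq, e_sq',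
    TensorProduct.neg_tmul, TensorProduct.tmul_neg, mul_neg, neg_mul, neg_neg, smul_neg]
  module

lemma K1_e012 (y : Cl3) : K1 ((e 0 * (e 1 * e 2)) ⊗ₜ[ℝ] y) = 0 := by
  simp only [K1, J, w0, w1, w2, Algebra.TensorProduct.tmul_mul_tmul, one_mul, mul_one,
    smul_mul_assoc, sub_mul, mul_assoc, e10, e20, e21, e10', e20', e21', e_sq, e_sq',
    TensorProduct.neg_tmul, TensorProduct.tmul_neg, mul_neg, neg_mul, neg_neg, smul_neg]
  module

end K1lemmas

lemma key (lam : Fin 8 → ℝ) :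
    K1 ((X 0 + X 1 + X 2) * ∑ A : Fin 8, lam A • XA A) =
      (lam 0 + lam 1 + lam 4 + lam 5) • (e 0 ⊗ₜ[ℝ] e 0)
    + (lam 0 + lam 1 + lam 4 + lam 5) • (e 1 ⊗ₜ[ℝ] e 1)
    + ((lam 0 + lam 1 + lam 2 + lam 3 + lam 4 + lam 5 + lam 6 + lam 7)/2) • (e 2 ⊗ₜ[ℝ] e 2)
    + (lam 0 - lam 1 + (lam 4 - lam 5)/2 - (lam 6 - lam 7)/2) •
        ((e 0 * e 1) ⊗ₜ[ℝ] (e 0 * e 1))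
    + ((lam 0 - lam 1)/2 + (lam 2 - lam 3)/2 + (lam 4 - lam 5)) •
        ((e 0 * e 2) ⊗ₜ[ℝ] (e 0 * e 2))
    + ((lam 0 - lam 1)/2 - (lam 2 - lam 3)/2 + (lam 4 - lam 5)) •
        ((e 1 * e 2) ⊗ₜ[ℝ] (e 1 * e 2)) := by
  rw [hsum, K1_add, K1_add, K1_add, K1_add, K1_add, K1_add, K1_add,
    K1_smul, K1_smul, K1_smul, K1_smul, K1_smul, K1_smul, K1_smul, K1_smul,
    K1_one, K1_e0, K1_e1, K1_e2, K1_e01, K1_e02, K1_e12, K1_e012]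
  match_scalars <;> ring

abbrev M2 : Type := Matrix (Fin 2) (Fin 2) ℂ
abbrev M4 : Type := Matrix (Fin 2 × Fin 2) (Fin 2 × Fin 2) ℂ

open Complex in
def sig : Fin 3 → M2 := ![!![0,1;1,0], !![0,-I;I,0], !![1,0;0,-1]]
open Complex in
def sig' : Fin 3 → M2 := ![!![0,1;1,0], !![0,I;-I,0], !![1,0;0,-1]]

-- 2x2 relations
lemma sig_sq (i : Fin 3) : sig i * sig i = 1 := by
  fin_cases i <;> (ext a b; fin_cases a <;> fin_cases b <;>
    simp [sig, Matrix.mul_apply, Fin.sum_univ_two, Matrix.one_apply])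
lemma sig'_sq (i : Fin 3) : sig' i * sig' i = 1 := by
  fin_cases i <;> (ext a b; fin_cases a <;> fin_cases b <;>
    simp [sig', Matrix.mul_apply, Fin.sum_univ_two, Matrix.one_apply])
lemma sig_ac01 : sig 0 * sig 1 = -(sig 1 * sig 0) := by
  ext a b; fin_cases a <;> fin_cases b <;>
    simp [sig, Matrix.mul_apply, Fin.sum_univ_two]
lemma sig_ac02 : sig 0 * sig 2 = -(sig 2 * sig 0) := by
  ext a b; fin_cases a <;> fin_cases b <;>
    simp [sig, Matrix.mul_apply, Fin.sum_univ_two]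
lemma sig_ac12 : sig 1 * sig 2 = -(sig 2 * sig 1) := by
  ext a b; fin_cases a <;> fin_cases b <;>
    simp [sig, Matrix.mul_apply, Fin.sum_univ_two]
lemma sig'_ac01 : sig' 0 * sig' 1 = -(sig' 1 * sig' 0) := by
  ext a b; fin_cases a <;> fin_cases b <;>
    simp [sig', Matrix.mul_apply, Fin.sum_univ_two]
lemma sig'_ac02 : sig' 0 * sig' 2 = -(sig' 2 * sig' 0) := by
  ext a b; fin_cases a <;> fin_cases b <;>
    simp [sig', Matrix.mul_apply, Fin.sum_univ_two]
lemma sig'_ac12 : sig' 1 * sig' 2 = -(sig' 2 * sig' 1) := by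
  ext a b; fin_cases a <;> fin_cases b <;>
    simp [sig', Matrix.mul_apply, Fin.sum_univ_two]

lemma neg_kron (A B : M2) : (-A) ⊗ₖ B = -(A ⊗ₖ B) := by
  ext ⟨a,b⟩ ⟨c,d⟩; simp [Matrix.kroneckerMap_apply]
lemma kron_neg (A B : M2) : A ⊗ₖ (-B) = -(A ⊗ₖ B) := by
  ext ⟨a,b⟩ ⟨c,d⟩; simp [Matrix.kroneckerMap_apply]

def G (i : Fin 3) : M4 := sig i ⊗ₖ (1 : M2)
def H (i : Fin 3) : M4 := (1 : M2) ⊗ₖ sig i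
def H' (i : Fin 3) : M4 := (1 : M2) ⊗ₖ sig' i

lemma G_sq (i : Fin 3) : G i * G i = 1 := by
  rw [G, ← Matrix.mul_kronecker_mul, sig_sq, one_mul, Matrix.one_kronecker_one]
lemma H_sq (i : Fin 3) : H i * H i = 1 := by
  rw [H, ← Matrix.mul_kronecker_mul, sig_sq, one_mul, Matrix.one_kronecker_one]
lemma H'_sq (i : Fin 3) : H' i * H' i = 1 := by
  rw [H', ← Matrix.mul_kronecker_mul, sig'_sq, one_mul, Matrix.one_kronecker_one]
lemma G_ac {i j : Fin 3} (hij : sig i * sig j = -(sig j * sig i)) :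
    G i * G j = -(G j * G i) := by
  rw [G, G, ← Matrix.mul_kronecker_mul, ← Matrix.mul_kronecker_mul, one_mul, hij,
    neg_kron _ _]
lemma H_ac {i j : Fin 3} (hij : sig i * sig j = -(sig j * sig i)) :
    H i * H j = -(H j * H i) := by
  rw [H, H, ← Matrix.mul_kronecker_mul, ← Matrix.mul_kronecker_mul, one_mul, hij,
    kron_neg _ _]
lemma H'_ac {i j : Fin 3} (hij : sig' i * sig' j = -(sig' j * sig' i)) :
    H' i * H' j = -(H' j * H' i) := by
  rw [H', H', ← Matrix.mul_kronecker_mul, ← Matrix.mul_kronecker_mul, one_mul, hij,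
    kron_neg _ _]
lemma GH_comm (i j : Fin 3) : Commute (G i) (H j) := by
  show _ = _
  rw [G, H, ← Matrix.mul_kronecker_mul, ← Matrix.mul_kronecker_mul]
  rw [one_mul, mul_one, one_mul, mul_one]
lemma GH'_comm (i j : Fin 3) : Commute (G i) (H' j) := by
  show _ = _
  rw [G, H', ← Matrix.mul_kronecker_mul, ← Matrix.mul_kronecker_mul]
  rw [one_mul, mul_one, one_mul, mul_one]

section reps
variable (T : Fin 3 → M4)
def fT : (Fin 3 → ℝ) →ₗ[ℝ] M4 where
  toFun v := v 0 • T 0 + v 1 • T 1 + v 2 • T 2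
  map_add' v w := by simp only [Pi.add_apply, add_smul]; abel
  map_smul' r v := by
    simp only [Pi.smul_apply, smul_eq_mul, mul_smul, RingHom.id_apply, smul_add]
lemma fT_apply (v : Fin 3 → ℝ) : fT T v = v 0 • T 0 + v 1 • T 1 + v 2 • T 2 := rfl
end reps

lemma fT_sq_of (T : Fin 3 → M4) (e0 : T 0 * T 0 = 1) (e1 : T 1 * T 1 = 1)
    (e2 : T 2 * T 2 = 1)
    (h01 : T 0 * T 1 = -(T 1 * T 0)) (h02 : T 0 * T 2 = -(T 2 * T 0))
    (h12 : T 1 * T 2 = -(T 2 * T 1)) (v : Fin 3 → ℝ) :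
    fT T v * fT T v = algebraMap ℝ M4 (Q3 v) := by
  have hQ : Q3 v = v 0 * v 0 + v 1 * v 1 + v 2 * v 2 := by
    simp [QuadraticMap.weightedSumSquares_apply, Fin.sum_univ_three]; try ring
  have halg : ∀ r : ℝ, algebraMap ℝ M4 (r * r) = (r * r) • (1 : M4) :=
    fun r => Algebra.algebraMap_eq_smul_one _
  rw [fT_apply, hQ, map_add, map_add, halg, halg, halg]
  rw [add_mul, add_mul, mul_add, mul_add, mul_add, mul_add, mul_add, mul_add,
    smul_mul_smul_comm, smul_mul_smul_comm, smul_mul_smul_comm, smul_mul_smul_comm,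
    smul_mul_smul_comm, smul_mul_smul_comm, smul_mul_smul_comm, smul_mul_smul_comm,
    smul_mul_smul_comm, e0, e1, e2, h01, h02, h12]
  module

def g : Cl3 →ₐ[ℝ] M4 :=
  CliffordAlgebra.lift Q3
    ⟨fT G, fT_sq_of G (G_sq 0) (G_sq 1) (G_sq 2) (G_ac sig_ac01) (G_ac sig_ac02)
      (G_ac sig_ac12)⟩
def h : Cl3 →ₐ[ℝ] M4 :=
  CliffordAlgebra.lift Q3
    ⟨fT H, fT_sq_of H (H_sq 0) (H_sq 1) (H_sq 2) (H_ac sig_ac01) (H_ac sig_ac02)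
      (H_ac sig_ac12)⟩
def h' : Cl3 →ₐ[ℝ] M4 :=
  CliffordAlgebra.lift Q3
    ⟨fT H', fT_sq_of H' (H'_sq 0) (H'_sq 1) (H'_sq 2) (H'_ac sig'_ac01) (H'_ac sig'_ac02)
      (H'_ac sig'_ac12)⟩

lemma g_e (l : Fin 3) : g (e l) = G l := by
  rw [e, g, CliffordAlgebra.lift_ι_apply, fT_apply]
  fin_cases l <;> simp [Pi.single_apply]
lemma h_e (l : Fin 3) : h (e l) = H l := by
  rw [e, h, CliffordAlgebra.lift_ι_apply, fT_apply]
  fin_cases l <;> simp [Pi.single_apply]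
lemma h'_e (l : Fin 3) : h' (e l) = H' l := by
  rw [e, h', CliffordAlgebra.lift_ι_apply, fT_apply]
  fin_cases l <;> simp [Pi.single_apply]

lemma comm_g (x : Cl3) (N : M4) (hN : ∀ i, Commute (G i) N) : Commute (g x) N := by
  induction x using CliffordAlgebra.induction with
  | algebraMap r => rw [AlgHom.commutes]; exact Algebra.commute_algebraMap_left _ _
  | ι v =>
      rw [g, CliffordAlgebra.lift_ι_apply, fT_apply]
      exact (((hN 0).smul_left _).add_left (((hN 1).smul_left _))).add_left
        ((hN 2).smul_left _)
  | mul a b ha hb => rw [map_mul]; exact ha.mul_left hb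
  | add a b ha hb => rw [map_add]; exact ha.add_left hb

lemma comm_h (y : Cl3) (N : M4) (hN : ∀ j, Commute N (H j)) : Commute N (h y) := by
  induction y using CliffordAlgebra.induction with
  | algebraMap r => rw [AlgHom.commutes]; exact Algebra.commute_algebraMap_right _ _
  | ι v =>
      rw [h, CliffordAlgebra.lift_ι_apply, fT_apply]
      exact (((hN 0).smul_right _).add_right (((hN 1).smul_right _))).add_right
        ((hN 2).smul_right _)
  | mul a b ha hb => rw [map_mul]; exact ha.mul_right hb
  | add a b ha hb => rw [map_add]; exact ha.add_right hb

lemma comm_h' (y : Cl3) (N : M4) (hN : ∀ j, Commute N (H' j)) : Commute N (h' y) := by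
  induction y using CliffordAlgebra.induction with
  | algebraMap r => rw [AlgHom.commutes]; exact Algebra.commute_algebraMap_right _ _
  | ι v =>
      rw [h', CliffordAlgebra.lift_ι_apply, fT_apply]
      exact (((hN 0).smul_right _).add_right (((hN 1).smul_right _))).add_right
        ((hN 2).smul_right _)
  | mul a b ha hb => rw [map_mul]; exact ha.mul_right hb
  | add a b ha hb => rw [map_add]; exact ha.add_right hb

def F1 : A3 →ₐ[ℝ] M4 :=
  Algebra.TensorProduct.lift g h fun x y =>
    comm_g x (h y) fun i => (comm_h y (G i) fun j => GH_comm i j)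

def F2 : A3 →ₐ[ℝ] M4 :=
  Algebra.TensorProduct.lift g h' fun x y =>
    comm_g x (h' y) fun i => (comm_h' y (G i) fun j => GH'_comm i j)

lemma F1_tmul (x y : Cl3) : F1 (x ⊗ₜ[ℝ] y) = g x * h y :=
  Algebra.TensorProduct.lift_tmul _ _ _ _ _
lemma F2_tmul (x y : Cl3) : F2 (x ⊗ₜ[ℝ] y) = g x * h' y :=
  Algebra.TensorProduct.lift_tmul _ _ _ _ _

lemma g_mul (i j : Fin 3) : g (e i * e j) = (sig i * sig j) ⊗ₖ (1 : M2) := by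
  rw [map_mul, g_e, g_e]
  simp only [G]
  rw [← Matrix.mul_kronecker_mul, mul_one]
lemma h_mul (i j : Fin 3) : h (e i * e j) = (1 : M2) ⊗ₖ (sig i * sig j) := by
  rw [map_mul, h_e, h_e]
  simp only [H]
  rw [← Matrix.mul_kronecker_mul, mul_one]
lemma h'_mul (i j : Fin 3) : h' (e i * e j) = (1 : M2) ⊗ₖ (sig' i * sig' j) := by
  rw [map_mul, h'_e, h'_e]
  simp only [H']
  rw [← Matrix.mul_kronecker_mul, mul_one]

lemma F1_single (l : Fin 3) : F1 (e l ⊗ₜ[ℝ] e l) = sig l ⊗ₖ sig l := by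
  rw [F1_tmul, g_e, h_e]
  simp only [G, H]
  rw [← Matrix.mul_kronecker_mul, mul_one, one_mul]
lemma F2_single (l : Fin 3) : F2 (e l ⊗ₜ[ℝ] e l) = sig l ⊗ₖ sig' l := by
  rw [F2_tmul, g_e, h'_e]
  simp only [G, H']
  rw [← Matrix.mul_kronecker_mul, mul_one, one_mul]
lemma F1_pair (i j : Fin 3) :
    F1 ((e i * e j) ⊗ₜ[ℝ] (e i * e j)) = (sig i * sig j) ⊗ₖ (sig i * sig j) := by
  rw [F1_tmul, g_mul, h_mul, ← Matrix.mul_kronecker_mul, mul_one, one_mul]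
lemma F2_pair (i j : Fin 3) :
    F2 ((e i * e j) ⊗ₜ[ℝ] (e i * e j)) = (sig i * sig j) ⊗ₖ (sig' i * sig' j) := by
  rw [F2_tmul, g_mul, h'_mul, ← Matrix.mul_kronecker_mul, mul_one, one_mul]

lemma sep {a b c d f g' cc : ℝ}
    (h : a • (e 0 ⊗ₜ[ℝ] e 0) + b • (e 1 ⊗ₜ[ℝ] e 1) + c • (e 2 ⊗ₜ[ℝ] e 2)
      + d • ((e 0 * e 1) ⊗ₜ[ℝ] (e 0 * e 1)) + f • ((e 0 * e 2) ⊗ₜ[ℝ] (e 0 * e 2))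
      + g' • ((e 1 * e 2) ⊗ₜ[ℝ] (e 1 * e 2)) = cc • (1 : A3)) :
    a = 0 ∧ b = 0 ∧ c = 0 ∧ d = 0 ∧ f = 0 ∧ g' = 0 ∧ cc = 0 := by
  have h1 := congrArg F1 h
  have h2 := congrArg F2 h
  simp only [map_add, map_smul, map_one, F1_single, F2_single, F1_pair, F2_pair] at h1 h2
  have q1 := congrFun (congrFun h1 (0,0)) (0,0)
  have q2 := congrFun (congrFun h1 (0,1)) (0,1)
  have q3 := congrFun (congrFun h1 (0,0)) (1,1)
  have q4 := congrFun (congrFun h1 (0,1)) (1,0)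
  have q5 := congrFun (congrFun h2 (0,0)) (0,0)
  have q6 := congrFun (congrFun h2 (0,0)) (1,1)
  have q7 := congrFun (congrFun h2 (0,1)) (1,0)
  simp only [Matrix.add_apply, Matrix.smul_apply, Matrix.one_apply,
    Matrix.kroneckerMap_apply, Matrix.mul_apply, Fin.sum_univ_two, sig, sig',
    Matrix.cons_val', Matrix.cons_val_zero, Matrix.cons_val_one, Matrix.head_cons,
    Matrix.head_fin_const, Matrix.empty_val', Matrix.cons_val_fin_one,
    Complex.real_smul, Complex.ext_iff, Matrix.cons_val, Matrix.cons_val_two, Matrix.tail_cons] at q1 q2 q3 q4 q5 q6 q7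
  norm_num at q1 q2 q3 q4 q5 q6 q7
  refine ⟨by linarith, by linarith, by linarith, by linarith, by linarith, by linarith,
    by linarith⟩

end aux

/-- `(K+1)(dr · Σ λ_A 𝒳_A)` is a real scalar multiple of `1` iff the five relations
on the `λ_A` hold; and in that case it is equal to `0`. Here `dr := X₁ + X₂ + X₃`. -/
theorem stmt18 (lam : Fin 8 → ℝ) :
    ((∃ c : ℝ, K1 ((X 0 + X 1 + X 2) * ∑ A : Fin 8, lam A • XA A) = c • (1 : A3)) ↔
      (lam 3 = lam 2 ∧
       lam 4 = -(3 * lam 0 + lam 1) / 4 ∧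
       lam 5 = -(lam 0 + 3 * lam 1) / 4 ∧
       lam 6 = (3/4) * (lam 0 - lam 1) - lam 2 ∧
       lam 7 = -(3/4) * (lam 0 - lam 1) - lam 2)) ∧
    ((lam 3 = lam 2 ∧
      lam 4 = -(3 * lam 0 + lam 1) / 4 ∧
      lam 5 = -(lam 0 + 3 * lam 1) / 4 ∧
      lam 6 = (3/4) * (lam 0 - lam 1) - lam 2 ∧
      lam 7 = -(3/4) * (lam 0 - lam 1) - lam 2) →
      K1 ((X 0 + X 1 + X 2) * ∑ A : Fin 8, lam A • XA A) = 0) := by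
  have hzero : (lam 3 = lam 2 ∧
      lam 4 = -(3 * lam 0 + lam 1) / 4 ∧
      lam 5 = -(lam 0 + 3 * lam 1) / 4 ∧
      lam 6 = (3/4) * (lam 0 - lam 1) - lam 2 ∧
      lam 7 = -(3/4) * (lam 0 - lam 1) - lam 2) →
      K1 ((X 0 + X 1 + X 2) * ∑ A : Fin 8, lam A • XA A) = 0 := by
    rintro ⟨h3, h4, h5, h6, h7⟩
    rw [key, h3, h4, h5, h6, h7]
    match_scalars <;> ring
  refine ⟨⟨?_, fun hrel => ⟨0, by rw [hzero hrel, zero_smul]⟩⟩, hzero⟩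
  rintro ⟨cc, hc⟩
  rw [key] at hc
  obtain ⟨ha, hb, hc6, hd, hf, hg, hcc⟩ := sep hc
  exact ⟨by linarith, by linarith, by linarith, by linarith, by linarith⟩
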